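/- For any seminormal quasi-crystals Q₁, Q₂, Q₃ of the same type Φ, the map (x₁ ⊗̈ x₂) ⊗̈ x₃ ↦ x₁ ⊗̈ (x₂ ⊗̈ x₃) (sending ⊥ to ⊥) is a quasi-crystal isomorphism from (Q₁ ⊗̈ Q₂) ⊗̈ Q₃ to Q₁ ⊗̈ (Q₂ ⊗̈ Q₃); in particular the quasi-tensor product of seminormal quasi-crystals is associative. -/

import Mathlib

/-! ## Root system setting -/

/-- The data of a root system `Φ` in a Euclidean space `V`, together with a choice of
simple roots `(α_i)_{i ∈ ι}` and a weight lattice `Λ`, with the integer-valued coroot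
pairing `pair λ i = ⟨λ, α_i^∨⟩ = 2⟪λ, α_i⟫/⟪α_i, α_i⟫` on the weight lattice. -/
structure QCSetting (V : Type*) [NormedAddCommGroup V] [InnerProductSpace ℝ V]
    (ι : Type*) where
  Φ : Set V
  finite : Φ.Finite
  nonempty : Φ.Nonempty
  zero_not_mem : (0 : V) ∉ Φ
  reflect_mem : ∀ a ∈ Φ, ∀ b ∈ Φ, b - (2 * (inner ℝ b a : ℝ) / (inner ℝ a a : ℝ)) • a ∈ Φ
  smul_root : ∀ a ∈ Φ, ∀ k : ℝ, k • a ∈ Φ → k = 1 ∨ k = -1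
  simple : ι → V
  simple_mem : ∀ i, simple i ∈ Φ
  simple_indep : LinearIndependent ℝ simple
  Λ : AddSubgroup V
  lattice_spans : Submodule.span ℝ (Λ : Set V) = ⊤
  root_mem_lattice : ∀ a ∈ Φ, a ∈ Λ
  pair : Λ → ι → ℤ
  pair_spec : ∀ (v : Λ) (i : ι),
    (pair v i : ℝ) = 2 * (inner ℝ (v : V) (simple i) : ℝ) / (inner ℝ (simple i) (simple i) : ℝ)

variable {V : Type*} [NormedAddCommGroup V] [InnerProductSpace ℝ V] {ι : Type*}

/-! ## Quasi-crystals -/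

/-- The structure maps of a quasi-crystal of type `S` on an underlying set `Q`:
a weight map `wt` with values in the weight lattice, partial quasi-Kashiwara operators
`e i, f i : Q → Q ⊔ {⊥}` (realized as `Option`-valued maps, `none` playing the role
of `⊥`), and maps `ε i, φ i : Q → ℤ ∪ {+∞}` (realized as `WithTop ℤ`). -/
structure QC (S : QCSetting V ι) (Q : Type*) where
  wt : Q → S.Λ
  e : ι → Q → Option Q
  f : ι → Q → Option Q
  ε : ι → Q → WithTop ℤ
  φ : ι → Q → WithTop ℤ

/-- `k`-fold iteration of a partial map `g : Q → Option Q` starting at `x`. -/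
def optIter {Q : Type*} (g : Q → Option Q) (k : ℕ) (x : Q) : Option Q :=
  (fun o => o.bind g)^[k] (some x)

/-- The axioms of a seminormal quasi-crystal. -/
structure QC.IsSeminormal {S : QCSetting V ι} {Q : Type*} (𝒬 : QC S Q) : Prop where
  phi_eq : ∀ i x, 𝒬.φ i x = 𝒬.ε i x + ((S.pair (𝒬.wt x) i : ℤ) : WithTop ℤ)
  wt_e : ∀ i x y, 𝒬.e i x = some y → (𝒬.wt y : V) = (𝒬.wt x : V) + S.simple i
  wt_f : ∀ i x y, 𝒬.f i x = some y → (𝒬.wt y : V) = (𝒬.wt x : V) - S.simple i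
  e_iff_f : ∀ i x y, 𝒬.e i x = some y ↔ 𝒬.f i y = some x
  e_of_top : ∀ i x, 𝒬.ε i x = ⊤ → 𝒬.e i x = none
  f_of_top : ∀ i x, 𝒬.ε i x = ⊤ → 𝒬.f i x = none
  eps_spec : ∀ i x, 𝒬.ε i x ≠ ⊤ → ∃ n : ℕ, 𝒬.ε i x = ((n : ℤ) : WithTop ℤ) ∧
    IsGreatest {k : ℕ | (optIter (𝒬.e i) k x).isSome} n
  phi_spec : ∀ i x, 𝒬.ε i x ≠ ⊤ → ∃ n : ℕ, 𝒬.φ i x = ((n : ℤ) : WithTop ℤ) ∧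
    IsGreatest {k : ℕ | (optIter (𝒬.f i) k x).isSome} n

/-- A seminormal crystal is a seminormal quasi-crystal in which `ε i x ≠ +∞` always. -/
def QC.IsSeminormalCrystal {S : QCSetting V ι} {Q : Type*} (𝒬 : QC S Q) : Prop :=
  𝒬.IsSeminormal ∧ ∀ i x, 𝒬.ε i x ≠ ⊤

/-! ## Tensor product -/

/-- The tensor product of two quasi-crystals of the same type. -/
noncomputable def QC.tensor {S : QCSetting V ι} {Q Q' : Type*} (𝒬 : QC S Q) (𝒬' : QC S Q') :
    QC S (Q × Q') where
  wt p := 𝒬.wt p.1 + 𝒬'.wt p.2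
  ε i p := max (𝒬.ε i p.1) (𝒬'.ε i p.2 + ((-(S.pair (𝒬.wt p.1) i) : ℤ) : WithTop ℤ))
  φ i p := max (𝒬.φ i p.1 + ((S.pair (𝒬'.wt p.2) i : ℤ) : WithTop ℤ)) (𝒬'.φ i p.2)
  e i p := if 𝒬'.ε i p.2 ≤ 𝒬.φ i p.1
    then (𝒬.e i p.1).map (fun y => (y, p.2))
    else (𝒬'.e i p.2).map (fun y => (p.1, y))
  f i p := if 𝒬'.ε i p.2 < 𝒬.φ i p.1
    then (𝒬.f i p.1).map (fun y => (y, p.2))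
    else (𝒬'.f i p.2).map (fun y => (p.1, y))

/-! ## Quasi-tensor product -/

/-- The (inverse-free) quasi-tensor product of two quasi-crystals of the same type. -/
noncomputable def QC.qtensor {S : QCSetting V ι} {Q Q' : Type*} (𝒬 : QC S Q) (𝒬' : QC S Q') :
    QC S (Q × Q') where
  wt p := 𝒬.wt p.1 + 𝒬'.wt p.2
  ε i p := if 0 < 𝒬.φ i p.1 ∧ 0 < 𝒬'.ε i p.2 then ⊤
    else max (𝒬.ε i p.1) (𝒬'.ε i p.2 + ((-(S.pair (𝒬.wt p.1) i) : ℤ) : WithTop ℤ))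
  φ i p := if 0 < 𝒬.φ i p.1 ∧ 0 < 𝒬'.ε i p.2 then ⊤
    else max (𝒬.φ i p.1 + ((S.pair (𝒬'.wt p.2) i : ℤ) : WithTop ℤ)) (𝒬'.φ i p.2)
  e i p := if 0 < 𝒬.φ i p.1 ∧ 0 < 𝒬'.ε i p.2 then none
    else if 𝒬'.ε i p.2 ≤ 𝒬.φ i p.1 then (𝒬.e i p.1).map (fun y => (y, p.2))
    else (𝒬'.e i p.2).map (fun y => (p.1, y))
  f i p := if 0 < 𝒬.φ i p.1 ∧ 0 < 𝒬'.ε i p.2 then none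
    else if 𝒬'.ε i p.2 < 𝒬.φ i p.1 then (𝒬.f i p.1).map (fun y => (y, p.2))
    else (𝒬'.f i p.2).map (fun y => (p.1, y))

/-! ## Homomorphisms -/

/-- A quasi-crystal homomorphism `ψ : 𝒬 → 𝒬'`, i.e. a map `Q ⊔ {⊥} → Q' ⊔ {⊥}`
(realized on `Option`s, `none` playing the role of `⊥`) compatible with the structure
maps in the appropriate sense. -/
structure QCHom {S : QCSetting V ι} {Q Q' : Type*} (𝒬 : QC S Q) (𝒬' : QC S Q') where
  toFun : Option Q → Option Q'
  map_none : toFun none = none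
  wt_eq : ∀ x y, toFun (some x) = some y → 𝒬'.wt y = 𝒬.wt x
  eps_eq : ∀ i x y, toFun (some x) = some y → 𝒬'.ε i y = 𝒬.ε i x
  phi_eq : ∀ i x y, toFun (some x) = some y → 𝒬'.φ i y = 𝒬.φ i x
  comm_e : ∀ i x x' y y', 𝒬.e i x = some x' → toFun (some x) = some y →
    toFun (some x') = some y' → 𝒬'.e i y = some y'
  comm_f : ∀ i x x' y y', 𝒬.f i x = some x' → toFun (some x) = some y →
    toFun (some x') = some y' → 𝒬'.f i y = some y'

/-! ## The free `⊗`-quasi-crystal monoid -/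

/-- Weight of a word: the sum of the weights of its letters. -/
def freeWt {S : QCSetting V ι} {Q : Type*} (𝒬 : QC S Q) : List Q → S.Λ
  | [] => 0
  | x :: w => 𝒬.wt x + freeWt 𝒬 w

/-- The map `ε̈_i` of the free `⊗`-quasi-crystal monoid. -/
noncomputable def freeEps {S : QCSetting V ι} {Q : Type*} (𝒬 : QC S Q) (i : ι) : List Q → WithTop ℤ
  | [] => 0
  | x :: w => max (𝒬.ε i x) (freeEps 𝒬 i w + ((-(S.pair (𝒬.wt x) i) : ℤ) : WithTop ℤ))

/-- The map `φ̈_i` of the free `⊗`-quasi-crystal monoid. -/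
noncomputable def freePhi {S : QCSetting V ι} {Q : Type*} (𝒬 : QC S Q) (i : ι) : List Q → WithTop ℤ
  | [] => 0
  | x :: w => max (𝒬.φ i x + ((S.pair (freeWt 𝒬 w) i : ℤ) : WithTop ℤ)) (freePhi 𝒬 i w)

/-- The operator `ë_i` of the free `⊗`-quasi-crystal monoid. -/
noncomputable def freeE {S : QCSetting V ι} {Q : Type*} (𝒬 : QC S Q) (i : ι) : List Q → Option (List Q)
  | [] => none
  | x :: w => if freeEps 𝒬 i w ≤ 𝒬.φ i x
      then (𝒬.e i x).map (· :: w)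
      else (freeE 𝒬 i w).map (x :: ·)

/-- The operator `f̈_i` of the free `⊗`-quasi-crystal monoid. -/
noncomputable def freeF {S : QCSetting V ι} {Q : Type*} (𝒬 : QC S Q) (i : ι) : List Q → Option (List Q)
  | [] => none
  | x :: w => if freeEps 𝒬 i w < 𝒬.φ i x
      then (𝒬.f i x).map (· :: w)
      else (freeF 𝒬 i w).map (x :: ·)

/-- The quasi-crystal structure of the free `⊗`-quasi-crystal monoid `F^⊗(𝒬)`
on the free monoid `Q*`. -/
noncomputable def freeTensorQC {S : QCSetting V ι} {Q : Type*} (𝒬 : QC S Q) : QC S (FreeMonoid Q) where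
  wt w := freeWt 𝒬 (FreeMonoid.toList w)
  ε i w := freeEps 𝒬 i (FreeMonoid.toList w)
  φ i w := freePhi 𝒬 i (FreeMonoid.toList w)
  e i w := (freeE 𝒬 i (FreeMonoid.toList w)).map (fun l => FreeMonoid.ofList l)
  f i w := (freeF 𝒬 i (FreeMonoid.toList w)).map (fun l => FreeMonoid.ofList l)

/-! ## The free `⊗̈`-quasi-crystal monoid -/

/-- The map `ε̈_i` of the free `⊗̈`-quasi-crystal monoid. -/
noncomputable def qfreeEps {S : QCSetting V ι} {Q : Type*} (𝒬 : QC S Q) (i : ι) : List Q → WithTop ℤ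
  | [] => 0
  | x :: w => if 0 < 𝒬.φ i x ∧ 0 < qfreeEps 𝒬 i w then ⊤
      else max (𝒬.ε i x) (qfreeEps 𝒬 i w + ((-(S.pair (𝒬.wt x) i) : ℤ) : WithTop ℤ))

/-- The map `φ̈_i` of the free `⊗̈`-quasi-crystal monoid. -/
noncomputable def qfreePhi {S : QCSetting V ι} {Q : Type*} (𝒬 : QC S Q) (i : ι) : List Q → WithTop ℤ
  | [] => 0
  | x :: w => if 0 < 𝒬.φ i x ∧ 0 < qfreeEps 𝒬 i w then ⊤
      else max (𝒬.φ i x + ((S.pair (freeWt 𝒬 w) i : ℤ) : WithTop ℤ)) (qfreePhi 𝒬 i w)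

/-- The operator `ë_i` of the free `⊗̈`-quasi-crystal monoid. -/
noncomputable def qfreeE {S : QCSetting V ι} {Q : Type*} (𝒬 : QC S Q) (i : ι) : List Q → Option (List Q)
  | [] => none
  | x :: w => if 0 < 𝒬.φ i x ∧ 0 < qfreeEps 𝒬 i w then none
      else if qfreeEps 𝒬 i w ≤ 𝒬.φ i x then (𝒬.e i x).map (· :: w)
      else (qfreeE 𝒬 i w).map (x :: ·)

/-- The operator `f̈_i` of the free `⊗̈`-quasi-crystal monoid. -/
noncomputable def qfreeF {S : QCSetting V ι} {Q : Type*} (𝒬 : QC S Q) (i : ι) : List Q → Option (List Q)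
  | [] => none
  | x :: w => if 0 < 𝒬.φ i x ∧ 0 < qfreeEps 𝒬 i w then none
      else if qfreeEps 𝒬 i w < 𝒬.φ i x then (𝒬.f i x).map (· :: w)
      else (qfreeF 𝒬 i w).map (x :: ·)

/-- The quasi-crystal structure of the free `⊗̈`-quasi-crystal monoid `F^⊗̈(𝒬)`
on the free monoid `Q*`. -/
noncomputable def freeQTensorQC {S : QCSetting V ι} {Q : Type*} (𝒬 : QC S Q) : QC S (FreeMonoid Q) where
  wt w := freeWt 𝒬 (FreeMonoid.toList w)
  ε i w := qfreeEps 𝒬 i (FreeMonoid.toList w)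
  φ i w := qfreePhi 𝒬 i (FreeMonoid.toList w)
  e i w := (qfreeE 𝒬 i (FreeMonoid.toList w)).map (fun l => FreeMonoid.ofList l)
  f i w := (qfreeF 𝒬 i (FreeMonoid.toList w)).map (fun l => FreeMonoid.ofList l)

/-! ## Connected components, plactic and hypoplactic congruences -/

/-- Two elements are connected in the quasi-crystal graph if they are related by the
reflexive-symmetric-transitive closure of the edge relation given by the
quasi-Kashiwara operators. -/
def QC.conn {S : QCSetting V ι} {Q : Type*} (𝒬 : QC S Q) : Q → Q → Prop :=
  Relation.EqvGen (fun x y => ∃ i, 𝒬.f i x = some y ∨ 𝒬.f i y = some x ∨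
    𝒬.e i x = some y ∨ 𝒬.e i y = some x)

/-- The connected component `𝒬(x)` of a quasi-crystal `𝒬` containing `x`, as a
quasi-crystal on the subtype of elements connected with `x`. -/
def QC.compQC {S : QCSetting V ι} {Q : Type*} (𝒬 : QC S Q) (x : Q) :
    QC S {y : Q // 𝒬.conn x y} where
  wt y := 𝒬.wt y.1
  ε i y := 𝒬.ε i y.1
  φ i y := 𝒬.φ i y.1
  e i y := (𝒬.e i y.1).pmap (fun z hz => (⟨z, hz⟩ : {y : Q // 𝒬.conn x y}))
    (fun z hz => Relation.EqvGen.trans _ _ _ y.2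
      (Relation.EqvGen.rel _ _ ⟨i, Or.inr (Or.inr (Or.inl hz))⟩))
  f i y := (𝒬.f i y.1).pmap (fun z hz => (⟨z, hz⟩ : {y : Q // 𝒬.conn x y}))
    (fun z hz => Relation.EqvGen.trans _ _ _ y.2
      (Relation.EqvGen.rel _ _ ⟨i, Or.inl hz⟩))

/-- The plactic congruence: `u ≈ v` iff there is a quasi-crystal isomorphism between the
connected components of `u` and `v` in `F^⊗(𝒬)` mapping `u` to `v`. -/
def placticRel {S : QCSetting V ι} {Q : Type*} (𝒬 : QC S Q)
    (u v : FreeMonoid Q) : Prop :=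
  ∃ ψ : QCHom ((freeTensorQC 𝒬).compQC u) ((freeTensorQC 𝒬).compQC v),
    Function.Bijective ψ.toFun ∧
    ψ.toFun (some ⟨u, Relation.EqvGen.refl u⟩) = some ⟨v, Relation.EqvGen.refl v⟩

/-- The hypoplactic congruence: `u ∼̈ v` iff there is a quasi-crystal isomorphism between
the connected components of `u` and `v` in `F^⊗̈(𝒬)` mapping `u` to `v`. -/
def hypoRel {S : QCSetting V ι} {Q : Type*} (𝒬 : QC S Q)
    (u v : FreeMonoid Q) : Prop :=
  ∃ ψ : QCHom ((freeQTensorQC 𝒬).compQC u) ((freeQTensorQC 𝒬).compQC v),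
    Function.Bijective ψ.toFun ∧
    ψ.toFun (some ⟨u, Relation.EqvGen.refl u⟩) = some ⟨v, Relation.EqvGen.refl v⟩

/-! ## Quasi-crystal monoids -/

/-- A monoid is equidivisible if whenever `x₁y₁ = x₂y₂` one of the factorizations
refines the other. -/
def Equidivisible (M : Type*) [Monoid M] : Prop :=
  ∀ x₁ x₂ y₁ y₂ : M, x₁ * y₁ = x₂ * y₂ →
    ∃ z : M, (x₂ = x₁ * z ∧ y₁ = z * y₂) ∨ (x₁ = x₂ * z ∧ y₂ = z * y₁)

/-- A `⊗`-quasi-crystal monoid: a seminormal quasi-crystal structure on a monoid whose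
structure maps interact with the multiplication by the tensor-product rules. -/
structure IsTensorQCMon {S : QCSetting V ι} {M : Type*} [Monoid M] (𝒬 : QC S M) : Prop where
  seminormal : 𝒬.IsSeminormal
  wt_mul : ∀ x y, 𝒬.wt (x * y) = 𝒬.wt x + 𝒬.wt y
  eps_mul : ∀ i x y, 𝒬.ε i (x * y) =
    max (𝒬.ε i x) (𝒬.ε i y + ((-(S.pair (𝒬.wt x) i) : ℤ) : WithTop ℤ))
  phi_mul : ∀ i x y, 𝒬.φ i (x * y) =
    max (𝒬.φ i x + ((S.pair (𝒬.wt y) i : ℤ) : WithTop ℤ)) (𝒬.φ i y)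
  e_mul : ∀ i x y, 𝒬.e i (x * y) =
    if 𝒬.ε i y ≤ 𝒬.φ i x then (𝒬.e i x).map (· * y) else (𝒬.e i y).map (x * ·)
  f_mul : ∀ i x y, 𝒬.f i (x * y) =
    if 𝒬.ε i y < 𝒬.φ i x then (𝒬.f i x).map (· * y) else (𝒬.f i y).map (x * ·)

/-- A `⊗̈`-quasi-crystal monoid: a seminormal quasi-crystal structure on a monoid such
that `x ⊗̈ y ↦ x·y` induces a quasi-crystal homomorphism `M ⊗̈ M → M`. -/
def IsQTensorQCMon {S : QCSetting V ι} {M : Type*} [Monoid M] (𝒬 : QC S M) : Prop :=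
  𝒬.IsSeminormal ∧
  ∃ ψ : QCHom (𝒬.qtensor 𝒬) 𝒬, ψ.toFun = Option.map (fun p => p.1 * p.2)

/-! ## The bicyclic monoid with zero `B₀` and the monoid `Z₀` -/

/-- The bicyclic monoid `⟨−, + | (+)(−) = ε⟩`: elements are normal forms `(−)^a(+)^b`. -/
structure Bic where
  neg : ℕ
  pos : ℕ
deriving DecidableEq

instance : Mul Bic :=
  ⟨fun x y => ⟨x.neg + (y.neg - x.pos), y.pos + (x.pos - y.neg)⟩⟩

theorem Bic.mul_def (x y : Bic) :
    x * y = ⟨x.neg + (y.neg - x.pos), y.pos + (x.pos - y.neg)⟩ := rfl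

instance : One Bic := ⟨⟨0, 0⟩⟩

theorem Bic.one_def : (1 : Bic) = ⟨0, 0⟩ := rfl

instance : Monoid Bic where
  mul_assoc x y z := by
    simp only [Bic.mul_def, Bic.mk.injEq]
    omega
  one_mul x := by
    simp only [Bic.one_def, Bic.mul_def]
    cases x
    simp only [Bic.mk.injEq]
    omega
  mul_one x := by
    simp only [Bic.one_def, Bic.mul_def]
    cases x
    simp only [Bic.mk.injEq]
    omega

/-- The bicyclic monoid with a zero element adjoined,
`B₀ = ⟨0, −, + | (+)(−) = ε, 0x = x0 = 0⟩`. -/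
abbrev B0 : Type := WithZero Bic

/-- The monoid `Z₀ = ⟨0, −, + | (+)(−) = 0, 0x = x0 = 0⟩`: the nonzero elements are the
normal forms `(−)^a(+)^b`. -/
inductive Z0 : Type
  | zero : Z0
  | word : ℕ → ℕ → Z0
deriving DecidableEq

instance : Mul Z0 :=
  ⟨fun x y => match x, y with
    | Z0.zero, _ => Z0.zero
    | _, Z0.zero => Z0.zero
    | Z0.word a b, Z0.word c d =>
        if 0 < b ∧ 0 < c then Z0.zero else Z0.word (a + c) (b + d)⟩

instance : One Z0 := ⟨Z0.word 0 0⟩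

instance : Zero Z0 := ⟨Z0.zero⟩

theorem Z0.one_def : (1 : Z0) = Z0.word 0 0 := rfl
theorem Z0.zero_def : (0 : Z0) = Z0.zero := rfl
theorem Z0.zero_mul' (x : Z0) : Z0.zero * x = Z0.zero := by cases x <;> rfl
theorem Z0.mul_zero' (x : Z0) : x * Z0.zero = Z0.zero := by cases x <;> rfl
theorem Z0.word_mul_word (a b c d : ℕ) :
    Z0.word a b * Z0.word c d =
      if 0 < b ∧ 0 < c then Z0.zero else Z0.word (a + c) (b + d) := rfl

instance : MonoidWithZero Z0 where
  mul_assoc x y z := by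
    cases x <;> cases y <;> cases z <;>
      simp only [Z0.zero_mul', Z0.mul_zero', Z0.word_mul_word]
    · split_ifs <;> simp_all [Z0.zero_mul', Z0.mul_zero', Z0.word_mul_word] <;>
        split_ifs <;> simp_all <;> omega
  one_mul x := by
    cases x
    · rfl
    · simp [Z0.one_def, Z0.word_mul_word]
  mul_one x := by
    cases x
    · rfl
    · simp [Z0.one_def, Z0.word_mul_word]
  zero_mul x := by cases x <;> rfl
  mul_zero x := by cases x <;> rfl

/-! ## Signature maps -/

/-- The `i`-signature map for the tensor product `⊗`:
`sgn_i^⊗(w) = 0` if `ε̈_i(w) = +∞`, and `(−)^{ε̈_i(w)}(+)^{φ̈_i(w)}` otherwise. -/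
noncomputable def tsgn {V : Type*} [NormedAddCommGroup V] [InnerProductSpace ℝ V] {ι : Type*}
    {S : QCSetting V ι} {Q : Type*} (𝒬 : QC S Q) (i : ι) (w : FreeMonoid Q) : B0 :=
  if freeEps 𝒬 i (FreeMonoid.toList w) = ⊤ then 0
  else ↑(Bic.mk (WithTop.untopD 0 (freeEps 𝒬 i (FreeMonoid.toList w))).toNat
      (WithTop.untopD 0 (freePhi 𝒬 i (FreeMonoid.toList w))).toNat)

/-- The `i`-signature map for the quasi-tensor product `⊗̈`:
`sgn_i^⊗̈(w) = 0` if `ε̈_i(w) = +∞`, and `(−)^{ε̈_i(w)}(+)^{φ̈_i(w)}` otherwise. -/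
noncomputable def qsgn {V : Type*} [NormedAddCommGroup V] [InnerProductSpace ℝ V] {ι : Type*}
    {S : QCSetting V ι} {Q : Type*} (𝒬 : QC S Q) (i : ι) (w : FreeMonoid Q) : Z0 :=
  if qfreeEps 𝒬 i (FreeMonoid.toList w) = ⊤ then 0
  else Z0.word (WithTop.untopD 0 (qfreeEps 𝒬 i (FreeMonoid.toList w))).toNat
      (WithTop.untopD 0 (qfreePhi 𝒬 i (FreeMonoid.toList w))).toNat


/-! ## Auxiliary results for the associativity theorem -/

lemma QTA_pair_add {S : QCSetting V ι} (v w : S.Λ) (i : ι) :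
    S.pair (v + w) i = S.pair v i + S.pair w i := by
  have h := S.pair_spec (v + w) i
  have hv := S.pair_spec v i
  have hw := S.pair_spec w i
  have key : ((S.pair (v + w) i : ℤ) : ℝ) = ((S.pair v i + S.pair w i : ℤ) : ℝ) := by
    push_cast
    rw [h, hv, hw]
    have hadd : (inner ℝ ((v : V) + (w : V)) (S.simple i) : ℝ)
        = inner ℝ (v : V) (S.simple i) + inner ℝ (w : V) (S.simple i) := inner_add_left _ _ _
    rw [show ((↑(v + w) : V)) = (v : V) + (w : V) from rfl, hadd]
    ring
  exact_mod_cast key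

/-- Dichotomy for a seminormal quasi-crystal: either `ε` and `φ` are both `⊤`,
or they are both naturals differing by the coroot pairing. -/
def QTA_Dich (a : ℤ) (e p : WithTop ℤ) : Prop :=
  (e = ⊤ ∧ p = ⊤) ∨
    ∃ n m : ℕ, e = ((n : ℤ) : WithTop ℤ) ∧ p = ((m : ℤ) : WithTop ℤ) ∧ (m : ℤ) = n + a

lemma QTA_dich {S : QCSetting V ι} {Q : Type*} (𝒬 : QC S Q) (h : 𝒬.IsSeminormal)
    (i : ι) (x : Q) : QTA_Dich (S.pair (𝒬.wt x) i) (𝒬.ε i x) (𝒬.φ i x) := by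
  by_cases he : 𝒬.ε i x = ⊤
  · exact Or.inl ⟨he, by rw [h.phi_eq i x, he, top_add]⟩
  · obtain ⟨n, hn, -⟩ := h.eps_spec i x he
    obtain ⟨m, hm, -⟩ := h.phi_spec i x he
    refine Or.inr ⟨n, m, hn, hm, ?_⟩
    have hq := h.phi_eq i x
    rw [hn, hm, ← WithTop.coe_add] at hq
    exact_mod_cast hq

set_option maxHeartbeats 1600000 in
lemma QTA_key_eps (a b c : ℤ) (e1 p1 e2 p2 e3 p3 : WithTop ℤ)
    (h1 : QTA_Dich a e1 p1) (h2 : QTA_Dich b e2 p2) (h3 : QTA_Dich c e3 p3) :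
    (if 0 < (if 0 < p1 ∧ 0 < e2 then (⊤ : WithTop ℤ) else max (p1 + ((b : ℤ) : WithTop ℤ)) p2) ∧ 0 < e3
       then (⊤ : WithTop ℤ)
     else max (if 0 < p1 ∧ 0 < e2 then (⊤ : WithTop ℤ) else max e1 (e2 + ((-a : ℤ) : WithTop ℤ)))
              (e3 + ((-(a + b) : ℤ) : WithTop ℤ)))
    =
    (if 0 < p1 ∧ 0 < (if 0 < p2 ∧ 0 < e3 then (⊤ : WithTop ℤ) else max e2 (e3 + ((-b : ℤ) : WithTop ℤ)))
       then (⊤ : WithTop ℤ)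
     else max e1 ((if 0 < p2 ∧ 0 < e3 then (⊤ : WithTop ℤ) else max e2 (e3 + ((-b : ℤ) : WithTop ℤ)))
          + ((-a : ℤ) : WithTop ℤ))) := by
  rcases h1 with ⟨rfl, rfl⟩ | ⟨n1, m1, rfl, rfl, hm1⟩ <;>
  rcases h2 with ⟨rfl, rfl⟩ | ⟨n2, m2, rfl, rfl, hm2⟩ <;>
  rcases h3 with ⟨rfl, rfl⟩ | ⟨n3, m3, rfl, rfl, hm3⟩ <;>
  simp only [← WithTop.coe_add, ← WithTop.coe_max, top_add, max_top_left, max_top_right] <;>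
  split_ifs <;> first
    | rfl
    | (simp only [← WithTop.coe_zero, ← WithTop.coe_add, ← WithTop.coe_max, top_add,
        max_top_left, max_top_right, WithTop.coe_lt_coe, WithTop.coe_le_coe, WithTop.coe_lt_top,
        le_top, top_le_iff, WithTop.coe_inj, lt_top_iff_ne_top, not_top_lt,
        ne_eq, not_not, lt_self_iff_false, le_refl, not_and, not_lt, not_le, and_true, true_and,
        and_false, false_and, not_true, not_false_eq_true, WithTop.coe_ne_top,
        WithTop.top_ne_coe] at * <;>
       omega)

set_option maxHeartbeats 1600000 in
lemma QTA_key_phi (a b c : ℤ) (e1 p1 e2 p2 e3 p3 : WithTop ℤ)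
    (h1 : QTA_Dich a e1 p1) (h2 : QTA_Dich b e2 p2) (h3 : QTA_Dich c e3 p3) :
    (if 0 < (if 0 < p1 ∧ 0 < e2 then (⊤ : WithTop ℤ) else max (p1 + ((b : ℤ) : WithTop ℤ)) p2) ∧ 0 < e3
       then (⊤ : WithTop ℤ)
     else max ((if 0 < p1 ∧ 0 < e2 then (⊤ : WithTop ℤ) else max (p1 + ((b : ℤ) : WithTop ℤ)) p2)
          + ((c : ℤ) : WithTop ℤ)) p3)
    =
    (if 0 < p1 ∧ 0 < (if 0 < p2 ∧ 0 < e3 then (⊤ : WithTop ℤ) else max e2 (e3 + ((-b : ℤ) : WithTop ℤ)))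
       then (⊤ : WithTop ℤ)
     else max (p1 + (((b + c) : ℤ) : WithTop ℤ))
          (if 0 < p2 ∧ 0 < e3 then (⊤ : WithTop ℤ) else max (p2 + ((c : ℤ) : WithTop ℤ)) p3)) := by
  rcases h1 with ⟨rfl, rfl⟩ | ⟨n1, m1, rfl, rfl, hm1⟩ <;>
  rcases h2 with ⟨rfl, rfl⟩ | ⟨n2, m2, rfl, rfl, hm2⟩ <;>
  rcases h3 with ⟨rfl, rfl⟩ | ⟨n3, m3, rfl, rfl, hm3⟩ <;>
  simp only [← WithTop.coe_add, ← WithTop.coe_max, top_add, max_top_left, max_top_right] <;>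
  split_ifs <;> first
    | rfl
    | (simp only [← WithTop.coe_zero, ← WithTop.coe_add, ← WithTop.coe_max, top_add,
        max_top_left, max_top_right, WithTop.coe_lt_coe, WithTop.coe_le_coe, WithTop.coe_lt_top,
        le_top, top_le_iff, WithTop.coe_inj, lt_top_iff_ne_top, not_top_lt,
        ne_eq, not_not, lt_self_iff_false, le_refl, not_and, not_lt, not_le, and_true, true_and,
        and_false, false_and, not_true, not_false_eq_true, WithTop.coe_ne_top,
        WithTop.top_ne_coe] at * <;>
       omega)

set_option maxHeartbeats 1600000 in
lemma QTA_key_e {R : Type*} (a b c : ℤ) (e1 p1 e2 p2 e3 p3 : WithTop ℤ)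
    (h1 : QTA_Dich a e1 p1) (h2 : QTA_Dich b e2 p2) (h3 : QTA_Dich c e3 p3)
    (r1 r2 r3 : Option R)
    (t1 : e1 = ⊤ → r1 = none) (t2 : e2 = ⊤ → r2 = none) (t3 : e3 = ⊤ → r3 = none) :
    (if 0 < (if 0 < p1 ∧ 0 < e2 then (⊤ : WithTop ℤ) else max (p1 + ((b : ℤ) : WithTop ℤ)) p2) ∧ 0 < e3
       then none
     else if e3 ≤ (if 0 < p1 ∧ 0 < e2 then (⊤ : WithTop ℤ) else max (p1 + ((b : ℤ) : WithTop ℤ)) p2)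
       then (if 0 < p1 ∧ 0 < e2 then none else if e2 ≤ p1 then r1 else r2)
       else r3)
    =
    (if 0 < p1 ∧ 0 < (if 0 < p2 ∧ 0 < e3 then (⊤ : WithTop ℤ) else max e2 (e3 + ((-b : ℤ) : WithTop ℤ)))
       then none
     else if (if 0 < p2 ∧ 0 < e3 then (⊤ : WithTop ℤ) else max e2 (e3 + ((-b : ℤ) : WithTop ℤ))) ≤ p1
       then r1
       else (if 0 < p2 ∧ 0 < e3 then none else if e3 ≤ p2 then r2 else r3)) := by
  rcases h1 with ⟨rfl, rfl⟩ | ⟨n1, m1, rfl, rfl, hm1⟩ <;>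
  rcases h2 with ⟨rfl, rfl⟩ | ⟨n2, m2, rfl, rfl, hm2⟩ <;>
  rcases h3 with ⟨rfl, rfl⟩ | ⟨n3, m3, rfl, rfl, hm3⟩ <;>
  (try simp only [t1 rfl]) <;> (try simp only [t2 rfl]) <;> (try simp only [t3 rfl]) <;>
  simp only [← WithTop.coe_add, ← WithTop.coe_max, top_add, max_top_left, max_top_right] <;>
  split_ifs <;> first
    | rfl
    | (simp only [← WithTop.coe_zero, ← WithTop.coe_add, ← WithTop.coe_max, top_add,
        max_top_left, max_top_right, WithTop.coe_lt_coe, WithTop.coe_le_coe, WithTop.coe_lt_top,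
        le_top, top_le_iff, WithTop.coe_inj, lt_top_iff_ne_top, not_top_lt,
        ne_eq, not_not, lt_self_iff_false, le_refl, not_and, not_lt, not_le, and_true, true_and,
        and_false, false_and, not_true, not_false_eq_true, WithTop.coe_ne_top,
        WithTop.top_ne_coe] at * <;>
       omega)

set_option maxHeartbeats 1600000 in
lemma QTA_key_f {R : Type*} (a b c : ℤ) (e1 p1 e2 p2 e3 p3 : WithTop ℤ)
    (h1 : QTA_Dich a e1 p1) (h2 : QTA_Dich b e2 p2) (h3 : QTA_Dich c e3 p3)
    (r1 r2 r3 : Option R)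
    (t1 : e1 = ⊤ → r1 = none) (t2 : e2 = ⊤ → r2 = none) (t3 : e3 = ⊤ → r3 = none) :
    (if 0 < (if 0 < p1 ∧ 0 < e2 then (⊤ : WithTop ℤ) else max (p1 + ((b : ℤ) : WithTop ℤ)) p2) ∧ 0 < e3
       then none
     else if e3 < (if 0 < p1 ∧ 0 < e2 then (⊤ : WithTop ℤ) else max (p1 + ((b : ℤ) : WithTop ℤ)) p2)
       then (if 0 < p1 ∧ 0 < e2 then none else if e2 < p1 then r1 else r2)
       else r3)
    =
    (if 0 < p1 ∧ 0 < (if 0 < p2 ∧ 0 < e3 then (⊤ : WithTop ℤ) else max e2 (e3 + ((-b : ℤ) : WithTop ℤ)))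
       then none
     else if (if 0 < p2 ∧ 0 < e3 then (⊤ : WithTop ℤ) else max e2 (e3 + ((-b : ℤ) : WithTop ℤ))) < p1
       then r1
       else (if 0 < p2 ∧ 0 < e3 then none else if e3 < p2 then r2 else r3)) := by
  rcases h1 with ⟨rfl, rfl⟩ | ⟨n1, m1, rfl, rfl, hm1⟩ <;>
  rcases h2 with ⟨rfl, rfl⟩ | ⟨n2, m2, rfl, rfl, hm2⟩ <;>
  rcases h3 with ⟨rfl, rfl⟩ | ⟨n3, m3, rfl, rfl, hm3⟩ <;>
  (try simp only [t1 rfl]) <;> (try simp only [t2 rfl]) <;> (try simp only [t3 rfl]) <;>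
  simp only [← WithTop.coe_add, ← WithTop.coe_max, top_add, max_top_left, max_top_right] <;>
  split_ifs <;> first
    | rfl
    | (simp only [← WithTop.coe_zero, ← WithTop.coe_add, ← WithTop.coe_max, top_add,
        max_top_left, max_top_right, WithTop.coe_lt_coe, WithTop.coe_le_coe, WithTop.coe_lt_top,
        le_top, top_le_iff, WithTop.coe_inj, lt_top_iff_ne_top, not_top_lt,
        ne_eq, not_not, lt_self_iff_false, le_refl, not_and, not_lt, not_le, and_true, true_and,
        and_false, false_and, not_true, not_false_eq_true, WithTop.coe_ne_top,
        WithTop.top_ne_coe] at * <;>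
       omega)

section QTAElem

variable {S : QCSetting V ι} {Q₁ Q₂ Q₃ : Type*}
  (𝒬₁ : QC S Q₁) (𝒬₂ : QC S Q₂) (𝒬₃ : QC S Q₃)

lemma QTA_eps_elem (h₁ : 𝒬₁.IsSeminormal) (h₂ : 𝒬₂.IsSeminormal) (h₃ : 𝒬₃.IsSeminormal) (i : ι) (x₁ : Q₁) (x₂ : Q₂) (x₃ : Q₃) :
    ((𝒬₁.qtensor 𝒬₂).qtensor 𝒬₃).ε i ((x₁, x₂), x₃)
      = (𝒬₁.qtensor (𝒬₂.qtensor 𝒬₃)).ε i (x₁, (x₂, x₃)) := by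
  have H := QTA_key_eps (S.pair (𝒬₁.wt x₁) i) (S.pair (𝒬₂.wt x₂) i) (S.pair (𝒬₃.wt x₃) i)
    _ _ _ _ _ _ (QTA_dich 𝒬₁ h₁ i x₁) (QTA_dich 𝒬₂ h₂ i x₂) (QTA_dich 𝒬₃ h₃ i x₃)
  simp only [QC.qtensor, QTA_pair_add]
  exact H

lemma QTA_phi_elem (h₁ : 𝒬₁.IsSeminormal) (h₂ : 𝒬₂.IsSeminormal) (h₃ : 𝒬₃.IsSeminormal) (i : ι) (x₁ : Q₁) (x₂ : Q₂) (x₃ : Q₃) :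
    ((𝒬₁.qtensor 𝒬₂).qtensor 𝒬₃).φ i ((x₁, x₂), x₃)
      = (𝒬₁.qtensor (𝒬₂.qtensor 𝒬₃)).φ i (x₁, (x₂, x₃)) := by
  have H := QTA_key_phi (S.pair (𝒬₁.wt x₁) i) (S.pair (𝒬₂.wt x₂) i) (S.pair (𝒬₃.wt x₃) i)
    _ _ _ _ _ _ (QTA_dich 𝒬₁ h₁ i x₁) (QTA_dich 𝒬₂ h₂ i x₂) (QTA_dich 𝒬₃ h₃ i x₃)
  simp only [QC.qtensor, QTA_pair_add]
  exact H

lemma QTA_e_elem (h₁ : 𝒬₁.IsSeminormal) (h₂ : 𝒬₂.IsSeminormal) (h₃ : 𝒬₃.IsSeminormal) (i : ι) (x₁ : Q₁) (x₂ : Q₂) (x₃ : Q₃) :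
    ((((𝒬₁.qtensor 𝒬₂).qtensor 𝒬₃).e i ((x₁, x₂), x₃)).map
        (fun p => (p.1.1, (p.1.2, p.2))))
      = (𝒬₁.qtensor (𝒬₂.qtensor 𝒬₃)).e i (x₁, (x₂, x₃)) := by
  have H := QTA_key_e (S.pair (𝒬₁.wt x₁) i) (S.pair (𝒬₂.wt x₂) i) (S.pair (𝒬₃.wt x₃) i)
    _ _ _ _ _ _ (QTA_dich 𝒬₁ h₁ i x₁) (QTA_dich 𝒬₂ h₂ i x₂) (QTA_dich 𝒬₃ h₃ i x₃)
    ((𝒬₁.e i x₁).map (fun y => (y, (x₂, x₃))))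
    ((𝒬₂.e i x₂).map (fun y => (x₁, (y, x₃))))
    ((𝒬₃.e i x₃).map (fun y => (x₁, (x₂, y))))
    (fun h' => by rw [h₁.e_of_top i x₁ h']; rfl)
    (fun h' => by rw [h₂.e_of_top i x₂ h']; rfl)
    (fun h' => by rw [h₃.e_of_top i x₃ h']; rfl)
  simp only [QC.qtensor, QTA_pair_add]
  refine Eq.trans (Eq.trans ?_ H) ?_ <;>
    split_ifs <;> simp only [Option.map_map, Option.map_none] <;> rfl

lemma QTA_f_elem (h₁ : 𝒬₁.IsSeminormal) (h₂ : 𝒬₂.IsSeminormal) (h₃ : 𝒬₃.IsSeminormal) (i : ι) (x₁ : Q₁) (x₂ : Q₂) (x₃ : Q₃) :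
    ((((𝒬₁.qtensor 𝒬₂).qtensor 𝒬₃).f i ((x₁, x₂), x₃)).map
        (fun p => (p.1.1, (p.1.2, p.2))))
      = (𝒬₁.qtensor (𝒬₂.qtensor 𝒬₃)).f i (x₁, (x₂, x₃)) := by
  have H := QTA_key_f (S.pair (𝒬₁.wt x₁) i) (S.pair (𝒬₂.wt x₂) i) (S.pair (𝒬₃.wt x₃) i)
    _ _ _ _ _ _ (QTA_dich 𝒬₁ h₁ i x₁) (QTA_dich 𝒬₂ h₂ i x₂) (QTA_dich 𝒬₃ h₃ i x₃)
    ((𝒬₁.f i x₁).map (fun y => (y, (x₂, x₃))))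
    ((𝒬₂.f i x₂).map (fun y => (x₁, (y, x₃))))
    ((𝒬₃.f i x₃).map (fun y => (x₁, (x₂, y))))
    (fun h' => by rw [h₁.f_of_top i x₁ h']; rfl)
    (fun h' => by rw [h₂.f_of_top i x₂ h']; rfl)
    (fun h' => by rw [h₃.f_of_top i x₃ h']; rfl)
  simp only [QC.qtensor, QTA_pair_add]
  refine Eq.trans (Eq.trans ?_ H) ?_ <;>
    split_ifs <;> simp only [Option.map_map, Option.map_none] <;> rfl

end QTAElem

/-- The map `(x₁ ⊗̈ x₂) ⊗̈ x₃ ↦ x₁ ⊗̈ (x₂ ⊗̈ x₃)` (sending `⊥` to `⊥`)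
is a quasi-crystal isomorphism `(Q₁ ⊗̈ Q₂) ⊗̈ Q₃ → Q₁ ⊗̈ (Q₂ ⊗̈ Q₃)`; in particular the
quasi-tensor product of seminormal quasi-crystals is associative. -/
theorem qtensor_assoc {V : Type*} [NormedAddCommGroup V] [InnerProductSpace ℝ V]
    {ι : Type*} {S : QCSetting V ι} {Q₁ Q₂ Q₃ : Type*}
    (𝒬₁ : QC S Q₁) (𝒬₂ : QC S Q₂) (𝒬₃ : QC S Q₃)
    (h₁ : 𝒬₁.IsSeminormal) (h₂ : 𝒬₂.IsSeminormal) (h₃ : 𝒬₃.IsSeminormal) :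
    ∃ ψ : QCHom ((𝒬₁.qtensor 𝒬₂).qtensor 𝒬₃) (𝒬₁.qtensor (𝒬₂.qtensor 𝒬₃)),
      ψ.toFun = Option.map (fun p => (p.1.1, (p.1.2, p.2))) ∧
      Function.Bijective ψ.toFun := by
  classical
  refine ⟨⟨Option.map (fun p => (p.1.1, (p.1.2, p.2))), rfl, ?_, ?_, ?_, ?_, ?_⟩, rfl, ?_⟩
  · rintro ⟨⟨x₁, x₂⟩, x₃⟩ y h
    rw [Option.map_some] at h
    injection h with h
    subst h
    simp only [QC.qtensor]
    exact (add_assoc _ _ _).symm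
  · rintro i ⟨⟨x₁, x₂⟩, x₃⟩ y h
    rw [Option.map_some] at h
    injection h with h
    subst h
    exact (QTA_eps_elem 𝒬₁ 𝒬₂ 𝒬₃ h₁ h₂ h₃ i x₁ x₂ x₃).symm
  · rintro i ⟨⟨x₁, x₂⟩, x₃⟩ y h
    rw [Option.map_some] at h
    injection h with h
    subst h
    exact (QTA_phi_elem 𝒬₁ 𝒬₂ 𝒬₃ h₁ h₂ h₃ i x₁ x₂ x₃).symm
  · rintro i ⟨⟨x₁, x₂⟩, x₃⟩ x' y y' hex hx hx'
    rw [Option.map_some] at hx hx'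
    injection hx with hx
    injection hx' with hx'
    subst hx; subst hx'
    rw [← QTA_e_elem 𝒬₁ 𝒬₂ 𝒬₃ h₁ h₂ h₃ i x₁ x₂ x₃, hex, Option.map_some]
  · rintro i ⟨⟨x₁, x₂⟩, x₃⟩ x' y y' hex hx hx'
    rw [Option.map_some] at hx hx'
    injection hx with hx
    injection hx' with hx'
    subst hx; subst hx'
    rw [← QTA_f_elem 𝒬₁ 𝒬₂ 𝒬₃ h₁ h₂ h₃ i x₁ x₂ x₃, hex, Option.map_some]
  · exact Function.bijective_iff_has_inverse.mpr
      ⟨Option.map (fun p => ((p.1, p.2.1), p.2.2)),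
       fun o => by cases o <;> rfl, fun o => by cases o <;> rfl⟩
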